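/- Let V' := ⊕_{j∈ℤ₊} (ℂtʲ)* be the restricted (graded) dual of ℂ[t], made into a D⁻-module by the contragredient action (a·ξ)(p) = −ξ(a·p) for a ∈ D⁻, ξ ∈ V', p ∈ ℂ[t]. Then V' is an irreducible highest weight D⁻-module with highest weight vector 1* (the functional dual to 1), and V' has growth 1. -/

import Mathlib

open Filter Module

noncomputable section

/-! ## The Lie algebra `D⁻` of regular differential operators on `ℂ`

The space `ℂ[t,t⁻¹]` of Laurent polynomials is realized as the space `LP = ℤ →₀ ℂ`
of finitely supported functions, `Finsupp.single n 1` playing the role of `tⁿ`. -/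

abbrev LP : Type := ℤ →₀ ℂ

/-- Multiplication by `t` : `tⁿ ↦ tⁿ⁺¹`. -/
def tM : Module.End ℂ LP := Finsupp.lsum ℂ fun n => Finsupp.lsingle (n + 1)

/-- The derivative `d/dt` : `tⁿ ↦ n tⁿ⁻¹`. -/
def ddt : Module.End ℂ LP := Finsupp.lsum ℂ fun n => (n : ℂ) • Finsupp.lsingle (n - 1)

/-- `D = t d/dt`. -/
def Dop : Module.End ℂ LP := tM * ddt

/-- `D⁻`, the Lie algebra of regular differential operators on `ℂ`: the span, inside
`End ℂ (ℂ[t,t⁻¹])`, of the operators `f(t) (d/dt)^m` with `f ∈ ℂ[t]`, `m ∈ ℤ₊`. -/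
def Dminus : Submodule ℂ (Module.End ℂ LP) :=
  Submodule.span ℂ {A | ∃ (k m : ℕ), A = tM ^ k * ddt ^ m}

/-- The subspace `ℂ[t] ⊆ ℂ[t,t⁻¹]`. -/
def polyPart : Submodule ℂ LP := Finsupp.supported ℂ ℂ (Set.Ici (0 : ℤ))

/-- Operators homogeneous of degree `j` for the principal gradation (`deg t = -1`,
`deg d/dt = 1`): those `A` with `A(tⁿ) ∈ ℂ · tⁿ⁻ʲ` for all `n ∈ ℤ`. -/
def homogDeg (j : ℤ) : Submodule ℂ (Module.End ℂ LP) where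
  carrier := {A | ∀ n : ℤ, A (Finsupp.single n 1) ∈ (ℂ ∙ (Finsupp.single (n - j) 1 : LP))}
  add_mem' := by
    intro A B hA hB n
    rw [LinearMap.add_apply]
    exact Submodule.add_mem _ (hA n) (hB n)
  zero_mem' := by
    intro n
    rw [LinearMap.zero_apply]
    exact Submodule.zero_mem _
  smul_mem' := by
    intro c A hA n
    rw [LinearMap.smul_apply]
    exact Submodule.smul_mem _ _ (hA n)

/-- The degree `j` piece `D⁻_j` of the principal `ℤ`-gradation of `D⁻`. -/
def DminusG (j : ℤ) : Submodule ℂ (Module.End ℂ LP) := Dminus ⊓ homogDeg j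

/-! ## Representations -/

/-- A representation on `M` of a set `S` of operators (a Lie subalgebra of `End ℂ V`),
encoded as a function `ρ` defined on all of `End ℂ V` which is linear and bracket-preserving
on members of `S` (its values outside `S` are irrelevant). -/
def IsRepOn {V M : Type*} [AddCommGroup V] [Module ℂ V] [AddCommGroup M] [Module ℂ M]
    (S : Set (Module.End ℂ V)) (ρ : Module.End ℂ V → Module.End ℂ M) : Prop :=
  (∀ A ∈ S, ∀ B ∈ S, ρ (A + B) = ρ A + ρ B) ∧
  (∀ (c : ℂ), ∀ A ∈ S, ρ (c • A) = c • ρ A) ∧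
  (∀ A ∈ S, ∀ B ∈ S, ρ ⁅A, B⁆ = ⁅ρ A, ρ B⁆)

/-- `W` is a submodule for the action `ρ` of `S`. -/
def ActInvariant {V M : Type*} [AddCommGroup V] [Module ℂ V] [AddCommGroup M] [Module ℂ M]
    (S : Set (Module.End ℂ V)) (ρ : Module.End ℂ V → Module.End ℂ M)
    (W : Submodule ℂ M) : Prop :=
  ∀ A ∈ S, W.map (ρ A) ≤ W

/-- The module `M` is irreducible under the action `ρ` of `S`. -/
def IsIrreducibleOn {V M : Type*} [AddCommGroup V] [Module ℂ V] [AddCommGroup M] [Module ℂ M]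
    (S : Set (Module.End ℂ V)) (ρ : Module.End ℂ V → Module.End ℂ M) : Prop :=
  Nontrivial M ∧ ∀ W : Submodule ℂ M, ActInvariant S ρ W → W = ⊥ ∨ W = ⊤

/-! ## Growth -/

/-- The growth of a `ℤ₊`-graded vector space (graded pieces `L j`, `j ≥ 0`), computed from the
filtration by the subspaces `⨁_{i ≤ j} L i`:  `limsup_{j → ∞} log dim (⨁_{i ≤ j} L i) / log j`,
as an extended real number. -/
def gradedGrowth {M : Type*} [AddCommGroup M] [Module ℂ M] (L : ℤ → Submodule ℂ M) : EReal :=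
  limsup (fun j : ℕ =>
    ((Real.log (Module.finrank ℂ ↥(⨆ i ∈ Finset.range (j + 1), L (i : ℤ))) /
      Real.log j : ℝ) : EReal)) atTop

/-- The restricted (graded) dual `V' = ⊕_{j ∈ ℤ₊} (ℂ tʲ)*` of `ℂ[t]`, realized inside the full
dual of `ℂ[t,t⁻¹]` as the functionals vanishing on all `tⁿ`, `n < 0`, and on all but finitely
many `tʲ`, `j ≥ 0`. -/
def Vdual : Submodule ℂ (Module.Dual ℂ LP) where
  carrier := {ξ | (∀ n : ℤ, n < 0 → ξ (Finsupp.single n 1) = 0) ∧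
                  (∃ N : ℕ, ∀ n : ℤ, (N : ℤ) ≤ n → ξ (Finsupp.single n 1) = 0)}
  add_mem' := by
    rintro ξ η ⟨h1, N1, hN1⟩ ⟨h2, N2, hN2⟩
    constructor
    · intro n hn
      rw [LinearMap.add_apply, h1 n hn, h2 n hn, add_zero]
    · refine ⟨max N1 N2, fun n hn => ?_⟩
      rw [LinearMap.add_apply,
        hN1 n (le_trans (by exact_mod_cast le_max_left N1 N2) hn),
        hN2 n (le_trans (by exact_mod_cast le_max_right N1 N2) hn), add_zero]
  zero_mem' := ⟨fun n _ => rfl, 0, fun n _ => rfl⟩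
  smul_mem' := by
    rintro c ξ ⟨h1, N, hN⟩
    constructor
    · intro n hn
      rw [LinearMap.smul_apply, h1 n hn, smul_zero]
    · exact ⟨N, fun n hn => by rw [LinearMap.smul_apply, hN n hn, smul_zero]⟩

/-- The projection of `ℂ[t,t⁻¹]` onto `ℂ[t]` along the span of the `tⁿ`, `n < 0`. -/
def projPoly : Module.End ℂ LP :=
  Finsupp.lsum ℂ fun n => if 0 ≤ n then Finsupp.lsingle n else 0

/-- The contragredient action `(a·ξ)(p) = -ξ(a p)` (`p ∈ ℂ[t]`) of an operator `a`
preserving `ℂ[t]`, on functionals supported on `ℂ[t]`. -/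
def dualAct (A : Module.End ℂ LP) : Module.End ℂ (Module.Dual ℂ LP) :=
  - (Module.Dual.transpose (R := ℂ) (projPoly ∘ₗ A ∘ₗ projPoly))

/-- The functional `(tʲ)*`. -/
def tStar (j : ℤ) : Module.Dual ℂ LP := Finsupp.lapply j

/-- The pieces of the induced principal gradation of `V'` : `V'_j = ℂ·(tʲ)*`, `j ≥ 0`. -/
def gradeD (j : ℤ) : Submodule ℂ (Module.Dual ℂ LP) :=
  if 0 ≤ j then ℂ ∙ tStar j else ⊥

/-! ### Basic computations -/

lemma projPoly_single (n : ℤ) :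
    projPoly (Finsupp.single n (1:ℂ)) = if 0 ≤ n then Finsupp.single n 1 else 0 := by
  rw [projPoly, Finsupp.lsum_single]
  split_ifs with h <;> simp [h]

lemma tM_single (n : ℤ) : tM (Finsupp.single n (1:ℂ)) = Finsupp.single (n+1) 1 := by
  rw [tM, Finsupp.lsum_single, Finsupp.lsingle_apply]

lemma ddt_single (n : ℤ) :
    ddt (Finsupp.single n (1:ℂ)) = (n:ℂ) • Finsupp.single (n-1) 1 := by
  rw [ddt, Finsupp.lsum_single]; simp [Finsupp.lsingle_apply]

/-- Falling-factorial coefficient. -/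
def cM (n : ℤ) (m : ℕ) : ℂ := ∏ i ∈ Finset.range m, ((n : ℂ) - i)

lemma tM_pow_single (k : ℕ) (n : ℤ) :
    (tM ^ k) (Finsupp.single n (1:ℂ)) = Finsupp.single (n+k) 1 := by
  induction k generalizing n with
  | zero => simp
  | succ k ih =>
    rw [pow_succ, Module.End.mul_apply, tM_single, ih]
    congr 1; push_cast; ring

lemma ddt_pow_single (m : ℕ) (n : ℤ) :
    (ddt ^ m) (Finsupp.single n (1:ℂ)) = cM n m • Finsupp.single (n-m) 1 := by
  induction m generalizing n with
  | zero => simp [cM]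
  | succ m ih =>
    rw [pow_succ, Module.End.mul_apply, ddt_single, map_smul, ih]
    rw [smul_smul]
    congr 1
    · rw [cM, cM, Finset.prod_range_succ']
      push_cast
      rw [sub_zero, mul_comm]
      congr 1
      exact Finset.prod_congr rfl fun i _ => by push_cast; ring
    · congr 1; push_cast; ring

lemma gen_single (k m : ℕ) (n : ℤ) :
    (tM ^ k * ddt ^ m) (Finsupp.single n (1:ℂ)) = cM n m • Finsupp.single (n - m + k) 1 := by
  rw [Module.End.mul_apply, ddt_pow_single, map_smul, tM_pow_single]

lemma tStar_single (j n : ℤ) : tStar j (Finsupp.single n (1:ℂ)) = if n = j then 1 else 0 := by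
  simp [tStar, Finsupp.single_apply]

lemma dual_ext {ξ η : Module.Dual ℂ LP}
    (h : ∀ n : ℤ, ξ (Finsupp.single n 1) = η (Finsupp.single n 1)) : ξ = η := by
  refine Finsupp.lhom_ext' fun n => LinearMap.ext_ring ?_
  simpa using h n

lemma dualAct_apply (A : Module.End ℂ LP) (ξ : Module.Dual ℂ LP) (p : LP) :
    dualAct A ξ p = -(ξ (projPoly (A (projPoly p)))) := by
  simp [dualAct, Module.Dual.transpose_apply]
lemma dualAct_gen (k m : ℕ) (j : ℤ) :
    dualAct (tM ^ k * ddt ^ m) (tStar j) =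
      if 0 ≤ j ∧ 0 ≤ j + m - k then (-(cM (j + m - k) m)) • tStar (j + m - k) else 0 := by
  apply dual_ext
  intro n
  rw [dualAct_apply, projPoly_single]
  by_cases hn : 0 ≤ n
  · rw [if_pos hn, gen_single, map_smul, projPoly_single, map_smul]
    by_cases hk : 0 ≤ n - m + k
    · rw [if_pos hk, tStar_single]
      by_cases he : n = j + m - k
      · have hjm : n - m + k = j := by omega
        rw [if_pos hjm]
        have h0j : 0 ≤ j := by omega
        rw [if_pos ⟨h0j, by omega⟩]
        simp only [LinearMap.smul_apply, tStar_single, ← he, if_pos rfl]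
        simp [smul_eq_mul]
      · rw [if_neg (by omega)]
        by_cases hc : 0 ≤ j ∧ 0 ≤ j + m - k
        · rw [if_pos hc]
          simp only [LinearMap.smul_apply, tStar_single, if_neg he]
          simp
        · rw [if_neg hc]; simp
    · rw [if_neg hk]; simp only [map_zero, smul_zero, neg_zero]
      by_cases hc : 0 ≤ j ∧ 0 ≤ j + m - k
      · rw [if_pos hc]
        have h' : n ≠ j + m - k := by omega
        rw [LinearMap.smul_apply, tStar_single, if_neg h', smul_zero]
      · rw [if_neg hc]; simp
  · rw [if_neg hn]; simp only [map_zero, neg_zero]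
    by_cases hc : 0 ≤ j ∧ 0 ≤ j + m - k
    · rw [if_pos hc]
      have h' : n ≠ j + m - k := by omega
      rw [LinearMap.smul_apply, tStar_single, if_neg h', smul_zero]
    · rw [if_neg hc]; simp

lemma dualAct_add (A B : Module.End ℂ LP) : dualAct (A + B) = dualAct A + dualAct B := by
  ext ξ p
  simp [dualAct_apply, LinearMap.add_apply, map_add]; ring

lemma dualAct_smul (c : ℂ) (A : Module.End ℂ LP) : dualAct (c • A) = c • dualAct A := by
  ext ξ p
  simp [dualAct_apply, LinearMap.smul_apply, map_smul, smul_eq_mul]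

lemma dualAct_zero : dualAct 0 = 0 := by
  ext ξ p; simp [dualAct_apply]

lemma tStar_mem_Vdual {j : ℤ} (hj : 0 ≤ j) : tStar j ∈ Vdual := by
  constructor
  · intro n hn
    rw [tStar_single, if_neg (by omega)]
  · refine ⟨(j + 1).toNat, fun n hn => ?_⟩
    rw [tStar_single, if_neg (by omega)]

lemma mem_Vdual_repr {ξ : Module.Dual ℂ LP} (hξ : ξ ∈ Vdual) (N : ℕ)
    (hN : ∀ n : ℤ, (N : ℤ) ≤ n → ξ (Finsupp.single n 1) = 0) :
    ξ = ∑ i ∈ Finset.range N, ξ (Finsupp.single (i : ℤ) 1) • tStar i := by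
  apply dual_ext
  intro n
  rw [LinearMap.sum_apply]
  simp only [LinearMap.smul_apply, tStar_single, smul_eq_mul]
  by_cases hn : 0 ≤ n ∧ n < N
  · obtain ⟨i0, rfl⟩ : ∃ i0 : ℕ, n = (i0 : ℤ) := ⟨n.toNat, by omega⟩
    rw [Finset.sum_eq_single i0]
    · simp
    · intro b _ hb
      rw [if_neg (by exact_mod_cast (Ne.symm hb)), mul_zero]
    · intro h
      exact absurd (Finset.mem_range.2 (by exact_mod_cast hn.2)) h
  · rw [Finset.sum_eq_zero]
    · rcases lt_or_ge n 0 with h | h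
      · exact hξ.1 n h
      · exact hN n (by omega)
    · intro i hi
      rw [if_neg (by simp only [Finset.mem_range] at hi; omega), mul_zero]

lemma Vdual_eq_iSup : (⨆ j, gradeD j) = Vdual := by
  apply le_antisymm
  · apply iSup_le
    intro j
    rw [gradeD]
    split_ifs with hj
    · rw [Submodule.span_singleton_le_iff_mem]
      exact tStar_mem_Vdual hj
    · exact bot_le
  · intro ξ hξ
    obtain ⟨N, hN⟩ := hξ.2
    rw [mem_Vdual_repr hξ N hN]
    apply Submodule.sum_mem
    intro i _
    apply Submodule.smul_mem
    have : tStar (i:ℤ) ∈ gradeD (i:ℤ) := by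
      rw [gradeD, if_pos (by positivity)]
      exact Submodule.mem_span_singleton_self _
    exact le_iSup gradeD (i:ℤ) this
lemma cM_one (n : ℤ) : cM n 1 = (n : ℂ) := by
  simp [cM]

lemma tM_eq_gen : tM = tM ^ 1 * ddt ^ 0 := by simp
lemma ddt_eq_gen : ddt = tM ^ 0 * ddt ^ 1 := by simp
lemma Dop_eq_gen : Dop = tM ^ 1 * ddt ^ 1 := by simp [Dop]

lemma tM_mem : tM ∈ Dminus := Submodule.subset_span ⟨1, 0, tM_eq_gen⟩
lemma ddt_mem : ddt ∈ Dminus := Submodule.subset_span ⟨0, 1, ddt_eq_gen⟩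
lemma Dop_mem : Dop ∈ Dminus := Submodule.subset_span ⟨1, 1, Dop_eq_gen⟩

lemma dualAct_tM_tStar {j : ℤ} (hj : 1 ≤ j) : dualAct tM (tStar j) = -tStar (j - 1) := by
  rw [tM_eq_gen, dualAct_gen, if_pos ⟨by omega, by omega⟩]
  have : j + (0:ℕ) - (1:ℕ) = j - 1 := by push_cast; ring
  rw [this]
  simp [cM]

lemma dualAct_ddt_tStar {j : ℤ} (hj : 0 ≤ j) :
    dualAct ddt (tStar j) = (-(j+1) : ℂ) • tStar (j + 1) := by
  rw [ddt_eq_gen, dualAct_gen, if_pos ⟨hj, by omega⟩]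
  have : j + (1:ℕ) - (0:ℕ) = j + 1 := by push_cast; ring
  rw [this, cM_one]
  push_cast
  ring_nf

lemma Dop_single (n : ℤ) : Dop (Finsupp.single n (1:ℂ)) = (n:ℂ) • Finsupp.single n 1 := by
  rw [Dop, Module.End.mul_apply, ddt_single, map_smul, tM_single]
  congr 1
  ring

lemma Dop_pow_single (k : ℕ) (n : ℤ) :
    (Dop ^ k) (Finsupp.single n (1:ℂ)) = ((n:ℂ)^k) • Finsupp.single n 1 := by
  induction k with
  | zero => simp
  | succ k ih =>
    rw [pow_succ, Module.End.mul_apply, Dop_single, map_smul, ih, smul_smul]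
    ring_nf

lemma dualAct_Dop_apply (ξ : Module.Dual ℂ LP) (n : ℤ) :
    dualAct Dop ξ (Finsupp.single n 1) =
      if 0 ≤ n then -((n:ℂ) * ξ (Finsupp.single n 1)) else 0 := by
  rw [dualAct_apply, projPoly_single]
  by_cases hn : 0 ≤ n
  · rw [if_pos hn, if_pos hn, Dop_single, map_smul, projPoly_single, if_pos hn, map_smul,
      smul_eq_mul]
  · rw [if_neg hn, if_neg hn, map_zero, map_zero, map_zero, neg_zero]

/-- Invariance of `Vdual` under the contragredient action of `D⁻`. -/
lemma Vdual_invariant : ∀ A ∈ Dminus, ∀ ξ ∈ Vdual, dualAct A ξ ∈ Vdual := by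
  intro A hA
  induction hA using Submodule.span_induction with
  | mem A hA =>
    obtain ⟨k, m, rfl⟩ := hA
    intro ξ hξ
    obtain ⟨N, hN⟩ := hξ.2
    rw [mem_Vdual_repr hξ N hN, map_sum]
    apply Submodule.sum_mem
    intro i _
    rw [map_smul]
    apply Submodule.smul_mem
    rw [dualAct_gen]
    split_ifs with hc
    · exact Submodule.smul_mem _ _ (tStar_mem_Vdual hc.2)
    · exact Submodule.zero_mem _
  | zero => intro ξ _; rw [dualAct_zero]; exact Submodule.zero_mem _
  | add A B _ _ ihA ihB =>
    intro ξ hξ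
    rw [dualAct_add]
    exact Submodule.add_mem _ (ihA ξ hξ) (ihB ξ hξ)
  | smul c A _ ihA =>
    intro ξ hξ
    rw [dualAct_smul]
    exact Submodule.smul_mem _ _ (ihA ξ hξ)
lemma exists_coeff {ξ : Module.Dual ℂ LP} (hξ : ξ ∈ Vdual) (h0 : ξ ≠ 0) :
    ∃ i : ℕ, ξ (Finsupp.single (i:ℤ) 1) ≠ 0 := by
  by_contra h
  push_neg at h
  apply h0
  apply dual_ext
  intro n
  rw [LinearMap.zero_apply]
  rcases lt_or_ge n 0 with h' | h'
  · exact hξ.1 n h'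
  · have := h n.toNat
    rwa [Int.toNat_of_nonneg h'] at this

lemma tStar_mem_of_mem (W : Submodule ℂ (Module.Dual ℂ LP)) (hW : W ≤ Vdual)
    (hinv : ∀ A ∈ Dminus, W.map (dualAct A) ≤ W) :
    ∀ S : Finset ℕ, ∀ ξ ∈ W, ξ ≠ 0 →
      (∀ n : ℕ, ξ (Finsupp.single (n:ℤ) 1) ≠ 0 → n ∈ S) →
      ∃ j : ℕ, tStar (j:ℤ) ∈ W := by
  intro S
  induction S using Finset.strongInduction with
  | _ S ih =>
    intro ξ hξW hne hsupp
    obtain ⟨j0, hj0⟩ := exists_coeff (hW hξW) hne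
    by_cases hone : ∀ n : ℕ, n ≠ j0 → ξ (Finsupp.single (n:ℤ) 1) = 0
    · refine ⟨j0, ?_⟩
      have heq : ξ = ξ (Finsupp.single (j0:ℤ) 1) • tStar (j0:ℤ) := by
        apply dual_ext
        intro n
        rw [LinearMap.smul_apply, tStar_single, smul_eq_mul]
        rcases lt_or_ge n 0 with h' | h'
        · rw [(hW hξW).1 n h', if_neg (by omega), mul_zero]
        · by_cases he : n = (j0:ℤ)
          · rw [if_pos he, mul_one, he]
          · rw [if_neg he, mul_zero]
            have := hone n.toNat (by omega)
            rwa [Int.toNat_of_nonneg h'] at this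
      have hin := W.smul_mem (ξ (Finsupp.single (j0:ℤ) 1))⁻¹ hξW
      nth_rewrite 2 [heq] at hin
      rwa [smul_smul, inv_mul_cancel₀ hj0, one_smul] at hin
    · push_neg at hone
      obtain ⟨j1, hj1ne, hj1⟩ := hone
      set ξ' := dualAct Dop ξ + (j0:ℂ) • ξ with hξ'def
      have hξ'W : ξ' ∈ W :=
        W.add_mem (hinv Dop Dop_mem ⟨ξ, hξW, rfl⟩) (W.smul_mem _ hξW)
      have hcoeff : ∀ n : ℕ, ξ' (Finsupp.single (n:ℤ) 1) =
          ((j0:ℂ) - n) * ξ (Finsupp.single (n:ℤ) 1) := by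
        intro n
        rw [hξ'def, LinearMap.add_apply, LinearMap.smul_apply, dualAct_Dop_apply,
          if_pos (by positivity), smul_eq_mul]
        push_cast
        ring
      have hj0S : j0 ∈ S := hsupp j0 hj0
      refine ih (S.erase j0) (Finset.erase_ssubset hj0S) ξ' hξ'W ?_ ?_
      · intro h0
        apply hj1
        have := hcoeff j1
        rw [h0, LinearMap.zero_apply] at this
        have hne' : (j0:ℂ) - j1 ≠ 0 := sub_ne_zero.2 (by exact_mod_cast hj1ne.symm)
        exact (mul_eq_zero.mp this.symm).resolve_left hne'
      · intro n hn
        rw [hcoeff n] at hn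
        rcases mul_ne_zero_iff.mp hn with ⟨h1, h2⟩
        refine Finset.mem_erase.2 ⟨?_, hsupp n h2⟩
        intro h
        exact h1 (by rw [h]; ring)

lemma tStar_zero_mem (W : Submodule ℂ (Module.Dual ℂ LP))
    (hinv : ∀ A ∈ Dminus, W.map (dualAct A) ≤ W) :
    ∀ j : ℕ, tStar (j:ℤ) ∈ W → tStar 0 ∈ W := by
  intro j
  induction j with
  | zero => exact fun h => by exact_mod_cast h
  | succ j ih =>
    intro h
    apply ih
    have hmem : dualAct tM (tStar ((j+1:ℕ):ℤ)) ∈ W := hinv tM tM_mem ⟨_, h, rfl⟩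
    rw [dualAct_tM_tStar (by exact_mod_cast Nat.succ_le_succ (Nat.zero_le j))] at hmem
    have : ((j+1:ℕ):ℤ) - 1 = (j:ℤ) := by push_cast; ring
    rw [this] at hmem
    simpa using W.neg_mem hmem

lemma tStar_all_mem (W : Submodule ℂ (Module.Dual ℂ LP))
    (hinv : ∀ A ∈ Dminus, W.map (dualAct A) ≤ W) (h0 : tStar 0 ∈ W) :
    ∀ j : ℕ, tStar (j:ℤ) ∈ W := by
  intro j
  induction j with
  | zero => exact_mod_cast h0
  | succ j ih =>
    have hmem : dualAct ddt (tStar (j:ℤ)) ∈ W := hinv ddt ddt_mem ⟨_, ih, rfl⟩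
    rw [dualAct_ddt_tStar (by positivity)] at hmem
    have hne : -(((j:ℤ):ℂ) + 1) ≠ 0 := by
      have h1 : ((j+1:ℕ):ℂ) ≠ 0 := Nat.cast_ne_zero.2 (Nat.succ_ne_zero j)
      push_cast at h1 ⊢
      exact neg_ne_zero.2 h1
    have hsm := W.smul_mem (-(((j:ℤ):ℂ) + 1))⁻¹ hmem
    rw [smul_smul, inv_mul_cancel₀ hne, one_smul] at hsm
    have hcast : (j:ℤ) + 1 = ((j+1:ℕ):ℤ) := by push_cast; ring
    rwa [hcast] at hsm

lemma Vdual_irreducible (W : Submodule ℂ (Module.Dual ℂ LP)) (hW : W ≤ Vdual)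
    (hinv : ∀ A ∈ Dminus, W.map (dualAct A) ≤ W) : W = ⊥ ∨ W = Vdual := by
  by_cases hbot : W = ⊥
  · exact Or.inl hbot
  · right
    obtain ⟨ξ, hξW, hξne⟩ := Submodule.exists_mem_ne_zero_of_ne_bot hbot
    obtain ⟨N, hN⟩ := (hW hξW).2
    obtain ⟨j, hj⟩ := tStar_mem_of_mem W hW hinv (Finset.range N) ξ hξW hξne
      (fun n hn => Finset.mem_range.2 (by
        by_contra h
        exact hn (hN n (by exact_mod_cast Nat.le_of_not_lt h))))
    have h0 : tStar 0 ∈ W := tStar_zero_mem W hinv j hj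
    have hall := tStar_all_mem W hinv h0
    refine le_antisymm hW ?_
    rw [← Vdual_eq_iSup]
    apply iSup_le
    intro i
    rw [gradeD]
    split_ifs with hi
    · rw [Submodule.span_singleton_le_iff_mem]
      have := hall i.toNat
      rwa [Int.toNat_of_nonneg hi] at this
    · exact bot_le
lemma dualAct_homog {A : Module.End ℂ LP} {j : ℤ} (hA : A ∈ homogDeg j) (k : ℤ) :
    ∃ c : ℂ, dualAct A (tStar k) = c • tStar (k + j) ∧ (¬(0 ≤ k ∧ 0 ≤ k + j) → c = 0) := by
  obtain ⟨a, ha⟩ := Submodule.mem_span_singleton.mp (hA (k + j))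
  refine ⟨if 0 ≤ k ∧ 0 ≤ k + j then -a else 0, ?_, fun h => if_neg h⟩
  apply dual_ext
  intro n
  rw [dualAct_apply, projPoly_single, LinearMap.smul_apply, tStar_single, smul_eq_mul]
  by_cases hn : 0 ≤ n
  · rw [if_pos hn]
    obtain ⟨b, hb⟩ := Submodule.mem_span_singleton.mp (hA n)
    rw [← hb, map_smul, map_smul, smul_eq_mul, projPoly_single]
    by_cases hnj : 0 ≤ n - j
    · rw [if_pos hnj, tStar_single]
      by_cases he : n = k + j
      · rw [if_pos (show n - j = k by omega), if_pos he, mul_one, mul_one,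
          if_pos ⟨by omega, by omega⟩]
        have h1 : n - j = k := by omega
        have hb' := hb
        rw [h1, he] at hb'
        have ha' := ha
        rw [add_sub_cancel_right] at ha'
        have hba : b = a := by
          have h3 := congrArg (fun f : LP => f k) (hb'.trans ha'.symm)
          simpa using h3
        rw [hba]
      · rw [if_neg (show n - j ≠ k by omega), if_neg he, mul_zero, mul_zero, neg_zero]
    · rw [if_neg hnj, map_zero, mul_zero, neg_zero]
      by_cases he : n = k + j
      · rw [if_pos he, mul_one, if_neg (show ¬(0 ≤ k ∧ 0 ≤ k + j) by omega)]
      · rw [if_neg he, mul_zero]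
  · rw [if_neg hn, map_zero, map_zero, map_zero, neg_zero]
    by_cases he : n = k + j
    · rw [if_pos he, mul_one, if_neg (show ¬(0 ≤ k ∧ 0 ≤ k + j) by omega)]
    · rw [if_neg he, mul_zero]

lemma highest_weight (j : ℤ) (hj : j < 0) (A : Module.End ℂ LP) (hA : A ∈ DminusG j) :
    dualAct A (tStar 0) = 0 := by
  obtain ⟨c, hc, h0⟩ := dualAct_homog hA.2 0
  rw [hc, h0 (by omega), zero_smul]

lemma grade_shift (j k : ℤ) (A : Module.End ℂ LP) (hA : A ∈ DminusG j) :
    (gradeD k).map (dualAct A) ≤ gradeD (k + j) := by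
  rintro ξ ⟨η, hη, rfl⟩
  rw [gradeD] at hη
  by_cases hk : 0 ≤ k
  · rw [if_pos hk] at hη
    obtain ⟨d, rfl⟩ := Submodule.mem_span_singleton.mp hη
    obtain ⟨c, hc, h0⟩ := dualAct_homog hA.2 k
    rw [map_smul, hc, gradeD]
    by_cases hkj : 0 ≤ k + j
    · rw [if_pos hkj]
      exact Submodule.smul_mem _ _ (Submodule.smul_mem _ _
        (Submodule.mem_span_singleton_self _))
    · rw [h0 (by omega), zero_smul, smul_zero]
      exact Submodule.zero_mem _
  · rw [if_neg hk] at hη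
    have hη0 : η = 0 := by simpa using hη
    rw [hη0, map_zero]
    exact Submodule.zero_mem _

lemma dualAct_Dop_pow (n : ℕ) : dualAct (Dop ^ n) (tStar 0) = (-(0:ℂ)^n) • tStar 0 := by
  apply dual_ext
  intro m
  rw [dualAct_apply, projPoly_single, LinearMap.smul_apply, tStar_single, smul_eq_mul]
  by_cases hm : 0 ≤ m
  · rw [if_pos hm, Dop_pow_single, map_smul, map_smul, smul_eq_mul, projPoly_single,
      if_pos hm, tStar_single]
    by_cases h0 : m = 0
    · subst h0; simp
    · rw [if_neg h0, mul_zero, mul_zero, neg_zero]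
  · rw [if_neg hm, map_zero, map_zero, map_zero, neg_zero, if_neg (by omega), mul_zero]

lemma tStar_linearIndependent : LinearIndependent ℂ (fun j : ℤ => tStar j) := by
  rw [linearIndependent_iff']
  intro s g hg i hi
  have := congrArg (fun ξ : Module.Dual ℂ LP => ξ (Finsupp.single i 1)) hg
  simp only [LinearMap.zero_apply] at this
  rw [← this, LinearMap.sum_apply, Finset.sum_eq_single i]
  · rw [LinearMap.smul_apply, tStar_single, if_pos rfl, smul_eq_mul, mul_one]
  · intro b _ hb
    rw [LinearMap.smul_apply, tStar_single, if_neg (Ne.symm hb), smul_eq_mul, mul_zero]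
  · exact fun h => absurd hi h

lemma gradeD_iSupIndep : iSupIndep gradeD := by
  apply iSupIndep.mono (s := fun j : ℤ => ℂ ∙ tStar j)
  · exact tStar_linearIndependent.iSupIndep_span_singleton
  · intro j
    rw [gradeD]
    split_ifs
    · exact le_refl _
    · exact bot_le
lemma biSup_gradeD (j : ℕ) :
    (⨆ i ∈ Finset.range (j + 1), gradeD (i : ℤ)) =
      Submodule.span ℂ (Set.range fun i : Fin (j + 1) => tStar (i : ℤ)) := by
  rw [Submodule.span_range_eq_iSup]
  apply le_antisymm
  · refine iSup₂_le fun i hi => ?_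
    rw [Finset.mem_range] at hi
    have : gradeD (i : ℤ) = ℂ ∙ tStar (i : ℤ) := by rw [gradeD, if_pos (by positivity)]
    rw [this]
    exact le_iSup (fun l : Fin (j+1) => ℂ ∙ tStar ((l : ℕ) : ℤ)) ⟨i, hi⟩
  · refine iSup_le fun i => ?_
    have : gradeD ((i : ℕ) : ℤ) = ℂ ∙ tStar ((i : ℕ) : ℤ) := by
      rw [gradeD, if_pos (by positivity)]
    rw [← this]
    exact le_iSup₂ (f := fun (l : ℕ) (_ : l ∈ Finset.range (j+1)) => gradeD (l : ℤ))
      (i : ℕ) (Finset.mem_range.2 i.2)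

lemma finrank_biSup (j : ℕ) :
    Module.finrank ℂ ↥(⨆ i ∈ Finset.range (j + 1), gradeD (i : ℤ)) = j + 1 := by
  rw [biSup_gradeD]
  have hli : LinearIndependent ℂ (fun i : Fin (j + 1) => tStar (i : ℤ)) := by
    have := tStar_linearIndependent.comp (fun i : Fin (j + 1) => (i : ℤ))
      (fun a b hab => by
        simp only at hab
        have : (a : ℕ) = (b : ℕ) := by exact_mod_cast hab
        exact Fin.ext this)
    exact this
  rw [finrank_span_eq_card hli, Fintype.card_fin]

lemma growth_one : gradedGrowth gradeD = 1 := by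
  rw [gradedGrowth]
  have heq : (fun j : ℕ =>
      ((Real.log (Module.finrank ℂ ↥(⨆ i ∈ Finset.range (j + 1), gradeD (i : ℤ))) /
        Real.log j : ℝ) : EReal)) =
      fun j : ℕ => ((Real.log (j + 1) / Real.log j : ℝ) : EReal) := by
    funext j
    rw [finrank_biSup j]
    push_cast
    rfl
  rw [heq]
  have hlim : Filter.Tendsto (fun j : ℕ => Real.log (j + 1) / Real.log j)
      Filter.atTop (nhds 1) := by
    have ha : Filter.Tendsto (fun j : ℕ => Real.log (1 + 1 / (j : ℝ)))
        Filter.atTop (nhds 0) := by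
      have h1 : Filter.Tendsto (fun j : ℕ => 1 + 1 / (j : ℝ)) Filter.atTop (nhds 1) := by
        simpa using tendsto_const_nhds.add (tendsto_one_div_atTop_nhds_zero_nat : Filter.Tendsto (fun n : ℕ => 1 / (n : ℝ)) Filter.atTop (nhds 0))
      have h2 := (Real.continuousAt_log one_ne_zero).tendsto.comp h1
      simpa [Function.comp_def] using h2
    have hb : Filter.Tendsto (fun j : ℕ => (Real.log j)⁻¹) Filter.atTop (nhds 0) :=
      (Real.tendsto_log_atTop.comp tendsto_natCast_atTop_atTop).inv_tendsto_atTop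
    have h3 : Filter.Tendsto (fun j : ℕ => 1 + Real.log (1 + 1 / (j : ℝ)) * (Real.log j)⁻¹)
        Filter.atTop (nhds 1) := by
      simpa using tendsto_const_nhds.add (ha.mul hb)
    refine h3.congr' ?_
    filter_upwards [Filter.eventually_ge_atTop 2] with j hj
    have hj0 : (0 : ℝ) < j := by
      have : (2 : ℝ) ≤ j := by exact_mod_cast hj
      linarith
    have hj1 : (1 : ℝ) < j := by
      have : (2 : ℝ) ≤ j := by exact_mod_cast hj
      linarith
    have hlogne : Real.log j ≠ 0 := ne_of_gt (Real.log_pos hj1)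
    have hsplit : Real.log ((j : ℝ) + 1) = Real.log j + Real.log (1 + 1 / (j : ℝ)) := by
      rw [← Real.log_mul (ne_of_gt hj0) (by positivity)]
      congr 1
      field_simp
    rw [hsplit]
    field_simp
  have hlimE : Filter.Tendsto (fun j : ℕ => ((Real.log (j + 1) / Real.log j : ℝ) : EReal))
      Filter.atTop (nhds 1) := by
    have := (continuous_coe_real_ereal.tendsto 1).comp hlim
    simpa [Function.comp_def] using this
  exact hlimE.limsup_eq
theorem stmt9 :
    -- `1*` is a nonzero element of `V'`
    tStar 0 ∈ Vdual ∧ tStar 0 ≠ 0 ∧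
    -- `V'` is a `D⁻`-module for the contragredient action
    (∀ A ∈ Dminus, Vdual.map (dualAct A) ≤ Vdual) ∧
    -- `V'` is irreducible
    (∀ W : Submodule ℂ (Module.Dual ℂ LP), W ≤ Vdual →
      (∀ A ∈ Dminus, W.map (dualAct A) ≤ W) → W = ⊥ ∨ W = Vdual) ∧
    -- `1*` is a highest weight vector: it is killed by `D⁻_j`, `j < 0`,
    (∀ j : ℤ, j < 0 → ∀ A ∈ DminusG j, dualAct A (tStar 0) = 0) ∧
    -- and each `Dⁿ` acts on it by a scalar
    (∃ Δ : ℕ → ℂ, ∀ n : ℕ, dualAct (Dop ^ n) (tStar 0) = Δ n • tStar 0) ∧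
    -- the induced principal gradation of `V'` has pieces `V'_j = ℂ·(tʲ)*` :
    gradeD 0 = (ℂ ∙ tStar 0) ∧
    iSupIndep gradeD ∧ (⨆ j, gradeD j) = Vdual ∧
    (∀ (j k : ℤ), ∀ A ∈ DminusG j, (gradeD k).map (dualAct A) ≤ gradeD (k + j)) ∧
    -- and `V'` has growth `1`
    gradedGrowth gradeD = 1 := by
  refine ⟨tStar_mem_Vdual le_rfl, ?_, ?_, Vdual_irreducible, highest_weight,
    ⟨fun n => -(0:ℂ)^n, dualAct_Dop_pow⟩, by rw [gradeD, if_pos le_rfl],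
    gradeD_iSupIndep, Vdual_eq_iSup, grade_shift, growth_one⟩
  · intro h
    have := congrArg (fun ξ : Module.Dual ℂ LP => ξ (Finsupp.single 0 1)) h
    simp only [LinearMap.zero_apply] at this
    rw [tStar_single, if_pos rfl] at this
    exact one_ne_zero this
  · intro A hA
    rintro ξ ⟨η, hη, rfl⟩
    exact Vdual_invariant A hA η hη
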